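/- Let M = (ρ, E) be an (n,k,d,r,δ)_i-matroid with r ≥ 1 and δ ≥ 2. Then d ≤ n − k + 1 − (⌈k/r⌉ − 1)(δ − 1). -/

import Mathlib

/-- A matroid given by an integer-valued rank function on subsets of a finite ground set. -/
structure RankMatroid (α : Type) [DecidableEq α] where
  E : Finset α
  rk : Finset α → ℤ
  rk_nonneg : ∀ X : Finset α, X ⊆ E → 0 ≤ rk X
  rk_le_card : ∀ X : Finset α, X ⊆ E → rk X ≤ X.card
  rk_mono : ∀ X Y : Finset α, X ⊆ Y → Y ⊆ E → rk X ≤ rk Y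
  rk_submod : ∀ X Y : Finset α, X ⊆ E → Y ⊆ E → rk (X ∪ Y) + rk (X ∩ Y) ≤ rk X + rk Y

namespace RankMatroid

variable {α : Type} [DecidableEq α]

/-- The minimum distance `d_X` of the restriction to `X`:
`d_X = min {|Y| : Y ⊆ X, ρ(X \ Y) < ρ(X)}`. -/
noncomputable def dist (M : RankMatroid α) (X : Finset α) : ℕ :=
  sInf {m : ℕ | ∃ Y : Finset α, Y ⊆ X ∧ Y.card = m ∧ M.rk (X \ Y) < M.rk X}

/-- Closure: `cl(X) = {y ∈ E : ρ(X ∪ {y}) = ρ(X)}`. -/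
def cl (M : RankMatroid α) (X : Finset α) : Finset α :=
  M.E.filter fun y => M.rk (insert y X) = M.rk X

/-- `X` is cyclic if `ρ(X \ {x}) = ρ(X)` for every `x ∈ X`. -/
def Cyclic (M : RankMatroid α) (X : Finset α) : Prop :=
  ∀ x ∈ X, M.rk (X.erase x) = M.rk X

/-- Cyclic core: `cyc(X) = {x ∈ X : ρ(X \ {x}) = ρ(X)}`. -/
def cyc (M : RankMatroid α) (X : Finset α) : Finset α :=
  X.filter fun x => M.rk (X.erase x) = M.rk X

/-- A cyclic flat is a set which is both cyclic and a flat. -/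
def IsCyclicFlat (M : RankMatroid α) (X : Finset α) : Prop :=
  X ⊆ M.E ∧ M.Cyclic X ∧ M.cl X = X

/-- `Z(M)`: the collection of cyclic flats of `M`. -/
def Z (M : RankMatroid α) : Set (Finset α) := {X | M.IsCyclicFlat X}

/-- `M` is non-degenerate: every singleton has rank at least one and `d ≥ 2`. -/
def NonDegenerate (M : RankMatroid α) : Prop :=
  (∀ x ∈ M.E, 1 ≤ M.rk {x}) ∧ 2 ≤ M.dist M.E

/-- `R` is a repair set for `x` with parameters `(r, δ)`. -/
def IsRepairSet (M : RankMatroid α) (r δ : ℤ) (x : α) (R : Finset α) : Prop :=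
  R ⊆ M.E ∧ x ∈ R ∧ (R.card : ℤ) ≤ r + δ - 1 ∧ δ ≤ (M.dist R : ℤ)

/-- The collection of cyclic flats of the restriction `M|X`. -/
def ZIn (M : RankMatroid α) (X : Finset α) : Set (Finset α) :=
  {Y | Y ⊆ X ∧ M.Cyclic Y ∧ X.filter (fun z => M.rk (insert z Y) = M.rk Y) = Y}

/-- `FX` is the meet, in the lattice `(Z(M), ⊆)`, of all cyclic flats containing `X`. -/
def IsMeetOfFlatsContaining (M : RankMatroid α) (X FX : Finset α) : Prop :=
  FX ∈ M.Z ∧ (∀ F ∈ M.Z, X ⊆ F → FX ⊆ F) ∧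
    ∀ W ∈ M.Z, (∀ F ∈ M.Z, X ⊆ F → W ⊆ F) → W ⊆ FX

end RankMatroid



section SingletonBoundHelpers

variable {α : Type} [DecidableEq α]

lemma myRk_empty (M : RankMatroid α) : M.rk ∅ = 0 := by
  have h1 := M.rk_le_card ∅ (Finset.empty_subset _)
  have h2 := M.rk_nonneg ∅ (Finset.empty_subset _)
  simp at h1
  omega

lemma myRk_union_le_add_card (M : RankMatroid α) (A C : Finset α)
    (hA : A ⊆ M.E) (hC : C ⊆ M.E) :
    M.rk (A ∪ C) ≤ M.rk A + (((C \ A).card : ℤ)) := by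
  have hCA : C \ A ⊆ M.E := (Finset.sdiff_subset).trans hC
  have h := M.rk_submod A (C \ A) hA hCA
  rw [Finset.union_sdiff_self_eq_union] at h
  have h0 : 0 ≤ M.rk (A ∩ (C \ A)) :=
    M.rk_nonneg _ ((Finset.inter_subset_left).trans hA)
  have h1 : M.rk (C \ A) ≤ ((C \ A).card : ℤ) := M.rk_le_card _ hCA
  linarith

lemma mySpanning (M : RankMatroid α) (A D C : Finset α)
    (hA : A ⊆ M.E) (hD : D ⊆ M.E) (hC : C ⊆ M.E) (hAC : A ⊆ C)
    (hspan : M.rk (A ∪ D) = M.rk A) : M.rk (C ∪ D) = M.rk C := by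
  have hsub := M.rk_submod C (A ∪ D) hC (Finset.union_subset hA hD)
  have h1 : C ∪ (A ∪ D) = C ∪ D := by
    rw [← Finset.union_assoc, Finset.union_eq_left.mpr hAC]
  have h2 : M.rk A ≤ M.rk (C ∩ (A ∪ D)) :=
    M.rk_mono _ _ (Finset.subset_inter hAC (Finset.subset_union_left))
      ((Finset.inter_subset_left).trans hC)
  rw [h1, hspan] at hsub
  exact le_antisymm (by linarith)
    (M.rk_mono C (C ∪ D) (Finset.subset_union_left) (Finset.union_subset hC hD))

lemma myRk_sdiff_eq (M : RankMatroid α) (R T : Finset α) (hR : R ⊆ M.E)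
    (hT : T ⊆ R) (hcard : (T.card : ℤ) < (M.dist R : ℤ)) :
    M.rk (R \ T) = M.rk R := by
  refine le_antisymm (M.rk_mono _ _ (Finset.sdiff_subset) hR) ?_
  by_contra hlt
  push_neg at hlt
  have hmem : T.card ∈ {m : ℕ | ∃ Y : Finset α, Y ⊆ R ∧ Y.card = m ∧ M.rk (R \ Y) < M.rk R} :=
    ⟨T, hT, rfl, lt_of_le_of_ne (M.rk_mono _ _ (Finset.sdiff_subset) hR)
      (fun h => absurd h (by intro h; exact absurd h (by linarith)))⟩
  have := Nat.sInf_le hmem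
  have : (M.dist R : ℤ) ≤ (T.card : ℤ) := by exact_mod_cast this
  linarith

lemma myRk_repair_le (M : RankMatroid α) (r δ : ℤ) (hr : 1 ≤ r) (hδ : 2 ≤ δ)
    (R : Finset α) (hR : R ⊆ M.E) (hdist : δ ≤ (M.dist R : ℤ))
    (hcard : (R.card : ℤ) ≤ r + δ - 1) : M.rk R ≤ r := by
  set t := min R.card (δ - 1).toNat with ht
  obtain ⟨T, hTsub, hTcard⟩ := Finset.exists_subset_card_eq (s := R) (n := t) (min_le_left _ _)
  have htle : (T.card : ℤ) ≤ δ - 1 := by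
    have : t ≤ (δ - 1).toNat := min_le_right _ _
    rw [hTcard]
    have h2 : ((δ - 1).toNat : ℤ) = δ - 1 := Int.toNat_of_nonneg (by linarith)
    calc (t : ℤ) ≤ ((δ - 1).toNat : ℤ) := by exact_mod_cast this
      _ = δ - 1 := h2
  have heq := myRk_sdiff_eq M R T hR hTsub (by linarith)
  have hle : M.rk (R \ T) ≤ ((R \ T).card : ℤ) :=
    M.rk_le_card _ ((Finset.sdiff_subset).trans hR)
  have hcardT : (R \ T).card = R.card - T.card := Finset.card_sdiff_of_subset hTsub
  have hcastsub : ((R \ T).card : ℤ) = (R.card : ℤ) - (T.card : ℤ) := by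
    rw [hcardT]
    exact_mod_cast Int.ofNat_sub (Finset.card_le_card hTsub)
  rcases le_total R.card (δ - 1).toNat with hmin | hmin
  · -- t = R.card, so rk R ≤ 0 ≤ r
    have : t = R.card := min_eq_left hmin
    rw [← heq]
    have : (T.card : ℤ) = (R.card : ℤ) := by rw [hTcard, this]
    rw [hcastsub] at hle
    linarith
  · -- t = (δ-1).toNat
    have htt : t = (δ - 1).toNat := min_eq_right hmin
    have : (T.card : ℤ) = δ - 1 := by
      rw [hTcard, htt]; exact Int.toNat_of_nonneg (by linarith)
    rw [← heq]
    rw [hcastsub, this] at hle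
    linarith

lemma myKey (M : RankMatroid α) (δ : ℤ) (hδ : 2 ≤ δ) (S R : Finset α)
    (hS : S ⊆ M.E) (hR : R ⊆ M.E) (hdist : δ ≤ (M.dist R : ℤ))
    (hup : M.rk S < M.rk (S ∪ R)) :
    M.rk (S ∪ R) + (δ - 1) ≤ M.rk S + (((R \ S).card : ℤ)) := by
  set t := (δ - 1).toNat with ht
  have htZ : (t : ℤ) = δ - 1 := Int.toNat_of_nonneg (by linarith)
  rcases le_or_gt (R \ S).card t with hcase | hcase
  · -- small case: contradiction
    exfalso
    have heq := myRk_sdiff_eq M R (R \ S) hR (Finset.sdiff_subset)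
      (by
        have : ((R \ S).card : ℤ) ≤ (t : ℤ) := by exact_mod_cast hcase
        linarith)
    rw [Finset.sdiff_sdiff_self_left] at heq
    -- rk (R ∩ S) = rk R; spanning with A = R ∩ S, D = R, C = S
    have hspan : M.rk ((R ∩ S) ∪ R) = M.rk (R ∩ S) := by
      rw [Finset.union_eq_right.mpr (Finset.inter_subset_left)]
      exact heq.symm
    have := mySpanning M (R ∩ S) R S ((Finset.inter_subset_left).trans hR) hR hS
      (Finset.inter_subset_right) hspan
    rw [this] at hup
    exact lt_irrefl _ hup
  · -- large case
    obtain ⟨T, hTsub, hTcard⟩ := Finset.exists_subset_card_eq (s := R \ S) (n := t) (le_of_lt hcase)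
    have hTR : T ⊆ R := hTsub.trans (Finset.sdiff_subset)
    have heq := myRk_sdiff_eq M R T hR hTR (by rw [hTcard]; linarith)
    have hspan : M.rk ((R \ T) ∪ T) = M.rk (R \ T) := by
      rw [Finset.sdiff_union_of_subset hTR]
      exact heq.symm
    have hRT_E : R \ T ⊆ M.E := (Finset.sdiff_subset).trans hR
    have h2 := mySpanning M (R \ T) T (S ∪ (R \ T)) hRT_E (hTR.trans hR)
      (Finset.union_subset hS hRT_E) (Finset.subset_union_right) hspan
    have h3 : (S ∪ (R \ T)) ∪ T = S ∪ R := by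
      rw [Finset.union_assoc, Finset.sdiff_union_of_subset hTR]
    rw [h3] at h2
    have h4 := myRk_union_le_add_card M S (R \ T) hS hRT_E
    have h5 : (R \ T) \ S = (R \ S) \ T := sdiff_right_comm _ _ _
    have h6 : (((R \ S) \ T).card : ℤ) = ((R \ S).card : ℤ) - (t : ℤ) := by
      have hc := Int.ofNat_sub (Finset.card_le_card hTsub)
      rw [Finset.card_sdiff_of_subset hTsub, hTcard]
      rw [hTcard] at hc
      exact hc
    rw [← h2] at h4
    rw [h5, h6] at h4
    linarith

lemma myExists_outside (M : RankMatroid α) (S B : Finset α) (hS : S ⊆ M.E)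
    (hB : B ⊆ M.E) (hlt : M.rk S < M.rk B) :
    ∃ b ∈ B, M.rk S < M.rk (insert b S) := by
  by_contra h
  push_neg at h
  have key : ∀ B' : Finset α, B' ⊆ B → M.rk (S ∪ B') = M.rk S := by
    intro B'
    induction B' using Finset.induction_on with
    | empty => intro _; simp
    | @insert a B' ha ih =>
      intro hsub
      have haB : a ∈ B := hsub (Finset.mem_insert_self _ _)
      have hB'B : B' ⊆ B := (Finset.subset_insert _ _).trans hsub
      have h1 : M.rk (insert a S) = M.rk S :=
        le_antisymm (h a haB) (M.rk_mono S _ (Finset.subset_insert _ _)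
          (Finset.insert_subset (hB haB) hS))
      have hspan : M.rk (S ∪ {a}) = M.rk S := by
        rw [Finset.union_comm, ← Finset.insert_eq]
        exact h1
      have h2 := mySpanning M S {a} (S ∪ B') hS
        (Finset.singleton_subset_iff.mpr (hB haB))
        (Finset.union_subset hS (hB'B.trans hB)) (Finset.subset_union_left) hspan
      have h3 : S ∪ insert a B' = (S ∪ B') ∪ {a} := by
        rw [Finset.union_insert, Finset.union_comm (S ∪ B') {a}, ← Finset.insert_eq]
      rw [h3, h2, ih hB'B]
  have h4 := key B le_rfl
  have h5 : M.rk B ≤ M.rk (S ∪ B) :=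
    M.rk_mono B (S ∪ B) (Finset.subset_union_right) (Finset.union_subset hS hB)
  linarith

lemma myCeil_le_succ {r a b : ℤ} (hr : 1 ≤ r) (h : a ≤ b + r) :
    ⌈(a : ℚ) / (r : ℚ)⌉ ≤ ⌈(b : ℚ) / (r : ℚ)⌉ + 1 := by
  have hr0 : (0 : ℚ) < (r : ℚ) := by exact_mod_cast lt_of_lt_of_le one_pos hr
  have h1 : (a : ℚ) / (r : ℚ) ≤ (b : ℚ) / (r : ℚ) + 1 := by
    rw [div_add' _ _ _ (ne_of_gt hr0), div_le_div_iff₀ hr0 hr0]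
    have : (a : ℚ) ≤ (b : ℚ) + (r : ℚ) := by exact_mod_cast h
    nlinarith
  calc ⌈(a : ℚ) / (r : ℚ)⌉ ≤ ⌈(b : ℚ) / (r : ℚ) + 1⌉ := Int.ceil_mono h1
    _ = ⌈(b : ℚ) / (r : ℚ)⌉ + 1 := by
      have := Int.ceil_add_intCast ((b : ℚ) / (r : ℚ)) 1
      simpa using this

lemma myLe_ceil_mul {r a : ℤ} (hr : 1 ≤ r) : a ≤ ⌈(a : ℚ) / (r : ℚ)⌉ * r := by
  have hr0 : (0 : ℚ) < (r : ℚ) := by exact_mod_cast lt_of_lt_of_le one_pos hr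
  have h1 : (a : ℚ) / (r : ℚ) ≤ (⌈(a : ℚ) / (r : ℚ)⌉ : ℚ) := Int.le_ceil _
  have h2 : (a : ℚ) ≤ (⌈(a : ℚ) / (r : ℚ)⌉ : ℚ) * (r : ℚ) := (div_le_iff₀ hr0).mp h1
  exact_mod_cast h2

lemma myCeil_pred_mul_lt {r k : ℤ} (hr : 1 ≤ r) :
    (⌈(k : ℚ) / (r : ℚ)⌉ - 1) * r < k := by
  have hr0 : (0 : ℚ) < (r : ℚ) := by exact_mod_cast lt_of_lt_of_le one_pos hr
  have h1 : (⌈(k : ℚ) / (r : ℚ)⌉ - 1 : ℤ) < ⌈(k : ℚ) / (r : ℚ)⌉ := by omega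
  have h2 : ((⌈(k : ℚ) / (r : ℚ)⌉ - 1 : ℤ) : ℚ) < (k : ℚ) / (r : ℚ) := Int.lt_ceil.mp h1
  have h3 : ((⌈(k : ℚ) / (r : ℚ)⌉ - 1 : ℤ) : ℚ) * (r : ℚ) < (k : ℚ) := (lt_div_iff₀ hr0).mp h2
  exact_mod_cast h3

lemma myBuild (M : RankMatroid α) (r δ : ℤ) (hr : 1 ≤ r) (hδ : 2 ≤ δ)
    (B : Finset α) (hBE : B ⊆ M.E) (hBrk : M.rk B = M.rk M.E)
    (hrep : ∀ x ∈ B, ∃ R : Finset α, M.IsRepairSet r δ x R) :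
    ∀ fuel : ℕ, ∀ S : Finset α, S ⊆ M.E → M.rk S ≤ M.rk M.E - 1 →
      M.rk M.E - M.rk S ≤ (fuel : ℤ) →
      ⌈(M.rk S : ℚ) / (r : ℚ)⌉ * (δ - 1) ≤ (S.card : ℤ) - M.rk S →
      ∃ S' : Finset α, S' ⊆ M.E ∧ M.rk S' ≤ M.rk M.E - 1 ∧
        (⌈(M.rk M.E : ℚ) / (r : ℚ)⌉ - 1) * (δ - 1) ≤ (S'.card : ℤ) - M.rk S' := by
  intro fuel
  induction fuel with
  | zero => intro S hSE h1 h2 _; exfalso; simp at h2; linarith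
  | succ n ih =>
    intro S hSE h1 hfuel hinv
    by_cases hdone : ⌈(M.rk M.E : ℚ) / (r : ℚ)⌉ - 1 ≤ ⌈(M.rk S : ℚ) / (r : ℚ)⌉
    · exact ⟨S, hSE, h1,
        le_trans (mul_le_mul_of_nonneg_right hdone (by linarith)) hinv⟩
    · push_neg at hdone
      have hSlt : M.rk S < M.rk B := by rw [hBrk]; linarith
      obtain ⟨b, hbB, hb⟩ := myExists_outside M S B hSE hBE hSlt
      obtain ⟨R, hRE, hbR, hRcard, hRdist⟩ := hrep b hbB
      have hrkR : M.rk R ≤ r := myRk_repair_le M r δ hr hδ R hRE hRdist hRcard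
      have hSR_E : S ∪ R ⊆ M.E := Finset.union_subset hSE hRE
      have hup : M.rk S < M.rk (S ∪ R) :=
        lt_of_lt_of_le hb (M.rk_mono (insert b S) (S ∪ R)
          (Finset.insert_subset (Finset.mem_union_right _ hbR) (Finset.subset_union_left))
          hSR_E)
      have hkey := myKey M δ hδ S R hSE hRE hRdist hup
      have hsubm := M.rk_submod S R hSE hRE
      have hint : 0 ≤ M.rk (S ∩ R) := M.rk_nonneg _ ((Finset.inter_subset_left).trans hSE)
      have hle_r : M.rk (S ∪ R) ≤ M.rk S + r := by linarith
      have hceilS := myLe_ceil_mul (a := M.rk S) hr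
      have hceilK := myCeil_pred_mul_lt (k := M.rk M.E) hr
      have hSmul : ⌈(M.rk S : ℚ) / (r : ℚ)⌉ * r ≤ (⌈(M.rk M.E : ℚ) / (r : ℚ)⌉ - 2) * r :=
        mul_le_mul_of_nonneg_right (by omega) (by linarith)
      have hnew_le : M.rk (S ∪ R) ≤ M.rk M.E - 1 := by nlinarith
      have hnew_fuel : M.rk M.E - M.rk (S ∪ R) ≤ (n : ℤ) := by
        push_cast at hfuel ⊢
        linarith
      have hceil_new : ⌈(M.rk (S ∪ R) : ℚ) / (r : ℚ)⌉ ≤ ⌈(M.rk S : ℚ) / (r : ℚ)⌉ + 1 :=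
        myCeil_le_succ hr hle_r
      have hcards : ((R \ S).card : ℤ) + (S.card : ℤ) = ((S ∪ R).card : ℤ) := by
        have := Finset.card_sdiff_add_card_eq_card (Finset.subset_union_left : S ⊆ S ∪ R)
        have h2 : ((S ∪ R) \ S).card = (R \ S).card := by
          congr 1
          rw [Finset.union_sdiff_left]  -- may need adjust
        rw [← h2]
        exact_mod_cast this
      apply ih (S ∪ R) hSR_E hnew_le hnew_fuel
      have hmul2 : ⌈(M.rk (S ∪ R) : ℚ) / (r : ℚ)⌉ * (δ - 1) ≤
          (⌈(M.rk S : ℚ) / (r : ℚ)⌉ + 1) * (δ - 1) :=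
        mul_le_mul_of_nonneg_right hceil_new (by linarith)
      nlinarith

end SingletonBoundHelpers

/-- Singleton-type bound for `(n,k,d,r,δ)_i`-matroids:
`d ≤ n − k + 1 − (⌈k/r⌉ − 1)(δ − 1)`. -/
theorem stmt0 {α : Type} [DecidableEq α] (M : RankMatroid α) (r δ : ℤ)
    (hr : 1 ≤ r) (hδ : 2 ≤ δ) (hM : M.NonDegenerate)
    (B : Finset α) (hBE : B ⊆ M.E) (hBind : M.rk B = (B.card : ℤ))
    (hBk : (B.card : ℤ) = M.rk M.E)
    (hrep : ∀ x ∈ B, ∃ R : Finset α, M.IsRepairSet r δ x R) :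
    (M.dist M.E : ℤ) ≤ (M.E.card : ℤ) - M.rk M.E + 1 -
      (⌈(M.rk M.E : ℚ) / (r : ℚ)⌉ - 1) * (δ - 1) := by
  classical
  have hrk0 : M.rk ∅ = 0 := myRk_empty M
  -- E is nonempty
  have hEne : M.E.Nonempty := by
    by_contra h
    rw [Finset.not_nonempty_iff_eq_empty] at h
    have hd0 : M.dist M.E = 0 := by
      rw [h]
      unfold RankMatroid.dist
      convert Nat.sInf_empty
      rw [Set.eq_empty_iff_forall_notMem]
      rintro m ⟨Y, hY, hYc, hYlt⟩
      rw [Finset.subset_empty] at hY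
      subst hY
      simp at hYlt
    have := hM.2
    omega
  have hk1 : 1 ≤ M.rk M.E := by
    obtain ⟨x, hx⟩ := hEne
    have h1 := hM.1 x hx
    have h2 := M.rk_mono {x} M.E (Finset.singleton_subset_iff.mpr hx) le_rfl
    linarith
  have hBrk : M.rk B = M.rk M.E := hBind.trans hBk
  obtain ⟨S, hSE, hS1, hS2⟩ := myBuild M r δ hr hδ B hBE hBrk hrep (M.rk M.E).toNat ∅
    (Finset.empty_subset _) (by rw [hrk0]; linarith)
    (by rw [hrk0]; simpa using Int.self_le_toNat (M.rk M.E))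
    (by rw [hrk0]; simp)
  -- maximal extension H
  set k := M.rk M.E with hkdef
  set P := M.E.powerset.filter (fun H => S ⊆ H ∧ M.rk H ≤ k - 1) with hPdef
  have hSP : S ∈ P := by
    rw [hPdef, Finset.mem_filter, Finset.mem_powerset]
    exact ⟨hSE, le_rfl, hS1⟩
  obtain ⟨H, hHP, hHmax⟩ := P.exists_max_image Finset.card ⟨S, hSP⟩
  rw [hPdef, Finset.mem_filter, Finset.mem_powerset] at hHP
  obtain ⟨hHE, hSH, hHrk⟩ := hHP
  have hHrk_eq : M.rk H = k - 1 := by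
    by_contra hne
    have hlt : M.rk H < k - 1 := lt_of_le_of_ne hHrk hne
    have hHneE : H ≠ M.E := by
      intro he
      rw [he] at hlt
      omega
    obtain ⟨e, heE, heH⟩ := Finset.exists_of_ssubset (ssubset_of_subset_of_ne hHE hHneE)
    have hins : insert e H ∈ P := by
      rw [hPdef, Finset.mem_filter, Finset.mem_powerset]
      refine ⟨Finset.insert_subset heE hHE, hSH.trans (Finset.subset_insert _ _), ?_⟩
      have h4 := myRk_union_le_add_card M H {e} hHE (Finset.singleton_subset_iff.mpr heE)
      have h5 : H ∪ {e} = insert e H := by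
        rw [Finset.union_comm, ← Finset.insert_eq]
      have h6 : (({e} \ H).card : ℤ) ≤ 1 := by
        have := Finset.card_le_card (Finset.sdiff_subset (s := {e}) (t := H))
        simp at this
        exact_mod_cast this
      rw [h5] at h4
      linarith
    have h7 := hHmax _ hins
    have h8 : H.card < (insert e H).card := by
      rw [Finset.card_insert_of_notMem heH]
      omega
    omega
  have hd : M.dist M.E ≤ (M.E \ H).card := by
    apply Nat.sInf_le
    refine ⟨M.E \ H, Finset.sdiff_subset, rfl, ?_⟩
    rw [Finset.sdiff_sdiff_eq_self hHE, hHrk_eq]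
    omega
  have hdZ : (M.dist M.E : ℤ) ≤ ((M.E \ H).card : ℤ) := by exact_mod_cast hd
  have h5 : M.rk H ≤ M.rk S + ((H \ S).card : ℤ) := by
    have := myRk_union_le_add_card M S H hSE hHE
    rwa [Finset.union_eq_right.mpr hSH] at this
  have hcards : ((H \ S).card : ℤ) + (S.card : ℤ) = (H.card : ℤ) := by
    exact_mod_cast Finset.card_sdiff_add_card_eq_card hSH
  have hEH : ((M.E \ H).card : ℤ) = (M.E.card : ℤ) - (H.card : ℤ) := by
    rw [Finset.card_sdiff_of_subset hHE]
    exact_mod_cast Int.ofNat_sub (Finset.card_le_card hHE)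
  rw [hEH] at hdZ
  rw [hHrk_eq] at h5
  linarith
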